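/- Let H = ∗_{a∈A} H_a be a nontrivial free product, let a ∈ H be a reduced word, let B ∈ H be a simple word, and let k be a positive integer with k ≥ |a|/|B| + 2. If a is a hyperbolic element, then when the word B^k a B^k is brought to reduced form, its first and last syllables are not affected. -/

import Mathlib

/-!
Common definitions: we model a nontrivial free product `H = ∗_{a ∈ A} H_a` as
`Monoid.CoprodI G` for a family of groups `G : ι → Type*` with `[Nontrivial ι]`
(the index set has at least two elements) and `∀ i, Nontrivial (G i)`
(all factors are nontrivial groups).
-/

namespace FreeProdPaper

open Monoid

variable {ι : Type*} {G : ι → Type*} [∀ i, Group (G i)]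

/-- An element of a free product is *hyperbolic* if it lies in no conjugate
`g⁻¹ H_a g` of a factor. -/
def IsHyperbolic (w : CoprodI G) : Prop :=
  ∀ (i : ι) (g : CoprodI G) (x : G i), w ≠ g⁻¹ * CoprodI.of x * g

/-- The reduced form (as the list of its syllables) of an element of a free product. -/
noncomputable def redList (w : CoprodI G) : List (Σ i, G i) :=
  letI := Classical.decEq ι
  letI : ∀ i, DecidableEq (G i) := fun _ => Classical.decEq _
  (CoprodI.Word.equiv w).toList

/-- The (syllable) length `|w|` of an element of a free product:
the number of syllables of its reduced form. -/
noncomputable def len (w : CoprodI G) : ℕ := (redList w).length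

/-- The cyclic length `|w|_c`: the length of a cyclically reduced word conjugate
to `w`, equivalently the minimal length of a conjugate of `w`. -/
noncomputable def cyclicLength (w : CoprodI G) : ℕ :=
  sInf (Set.range fun g : CoprodI G => len (g⁻¹ * w * g))

/-- A word is cyclically reduced iff it is nontrivial and has minimal length in
its conjugacy class (for a reduced word of length `≥ 2` this says exactly that its
first and last syllables lie in distinct factors). -/
def IsCyclicallyReduced (w : CoprodI G) : Prop :=
  w ≠ 1 ∧ len w = cyclicLength w

/-- `w` is a proper power: `w = h ^ n` for some `h` and some `n ≥ 2`. -/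
def IsProperPower (w : CoprodI G) : Prop :=
  ∃ (h : CoprodI G) (n : ℕ), 2 ≤ n ∧ w = h ^ n

/-- A *simple* word: a cyclically reduced word of length at least two that is not
a proper power. -/
def IsSimple (w : CoprodI G) : Prop :=
  IsCyclicallyReduced w ∧ 2 ≤ len w ∧ ¬ IsProperPower w

/-- The radical length `|w|_r` of a hyperbolic element `w = f⁻¹ ⬝ A^k ∘ f`
(`A` simple, `f` reduced, `k ≥ 1`) is `|A|`; equivalently, it is the least cyclic
length of a root of `w`. -/
noncomputable def radicalLength (w : CoprodI G) : ℕ :=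
  sInf {n | ∃ (h : CoprodI G) (k : ℕ), 0 < k ∧ w = h ^ k ∧ n = cyclicLength h}

/-- `u` is a *subword* of `w`: the reduced form of `w` is `f₁ ⬝ u ⬝ f₂`,
i.e. the reduced form of `u` occurs as a contiguous sublist of the reduced form
of `w`. -/
def IsSubword (u w : CoprodI G) : Prop :=
  ∃ l₁ l₂ : List (Σ i, G i), redList w = l₁ ++ redList u ++ l₂

/-- One step of bringing a list of syllables to reduced form which does not affect
the first or the last syllable of the word: two adjacent syllables from the same
factor, not including the first or the last syllable of the word, are merged
(or cancelled, if their product is trivial). -/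
def InnerStep (L L' : List (Σ i, G i)) : Prop :=
  ∃ (l₁ l₂ : List (Σ i, G i)) (i : ι) (a b : G i),
    l₁ ≠ [] ∧ l₂ ≠ [] ∧
    L = l₁ ++ ⟨i, a⟩ :: ⟨i, b⟩ :: l₂ ∧
    ((a * b = 1 ∧ L' = l₁ ++ l₂) ∨ (a * b ≠ 1 ∧ L' = l₁ ++ ⟨i, a * b⟩ :: l₂))

/-- `EndsUnaffected L w` : the concatenation `L` of syllables (of reduced words
whose product is `w`) can be brought to the reduced form of `w` by cancellations
and mergings none of which affects the first or the last syllable. -/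
def EndsUnaffected (L : List (Σ i, G i)) (w : CoprodI G) : Prop :=
  Relation.ReflTransGen InnerStep L (redList w)

/-- The commutator as used in the paper: `[x, y] = x⁻¹ y⁻¹ x y`. -/
def pcomm {H : Type*} [Group H] (x y : H) : H := x⁻¹ * y⁻¹ * x * y

/-- The word `L₂(z₀, z₁)` from the paper. -/
def L2 {H : Type*} [Group H] (x y : H) : H :=
  pcomm (x ^ 10) (y ^ 10) ^ 5000 * x * pcomm (x ^ 10) (y ^ 10) ^ 200 * y *
    pcomm (x ^ 10) (y ^ 10) ^ 400 * x⁻¹ * pcomm (x ^ 10) (y ^ 10) ^ 600 * y⁻¹ *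
    pcomm (x ^ 10) (y ^ 10) ^ 5000

/-- The words `E_{k̲[j,0]}`: `Ew k y j` is `E_{k̲[j+1,0]}(y₀, …, y_j)`, defined by
`E_{k̲[1,0]}(z₀) = z₀^{k₀}` and
`E_{k̲[j,0]}(z₀,…,z_{j-1}) = [E_{k̲[j-1,0]}(z₀,…,z_{j-2})², z_{j-1}^{2 k_{j-1}}]`. -/
def Ew {H : Type*} [Group H] (k : ℕ → ℕ) (y : ℕ → H) : ℕ → H
  | 0 => y 0 ^ k 0
  | j + 1 => pcomm (Ew k y j ^ 2) (y (j + 1) ^ (2 * k (j + 1)))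

/-- The words `E_n`: `En y j` is `E_{j+1}(y₀, …, y_j)`, defined by
`E₂(z₀, z₁) = [z₀², z₁²]` and `E_n(z₀,…,z_{n-1}) = [E_{n-1}(z₀,…,z_{n-2})², z_{n-1}²]`. -/
def En {H : Type*} [Group H] (y : ℕ → H) : ℕ → H
  | 0 => y 0
  | j + 1 => pcomm (En y j ^ 2) (y (j + 1) ^ 2)

/-- A subgroup `K` of `Γ` is *verbally closed* if every equation
`w(x₁,…,xₙ) = h` (with `w` in the free group and `h ∈ K`) having a solution
in `Γ` also has a solution in `K`. -/
def IsVerballyClosed {Γ : Type*} [Group Γ] (K : Subgroup Γ) : Prop :=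
  ∀ (n : ℕ) (w : FreeGroup (Fin n)) (h : Γ), h ∈ K →
    (∃ x : Fin n → Γ, FreeGroup.lift x w = h) →
    ∃ y : Fin n → Γ, (∀ i, y i ∈ K) ∧ FreeGroup.lift y w = h

/-- A subgroup `K` of `Γ` is *algebraically closed in `Γ`* if every finite system
of equations `w_j(x₁,…,xₙ, K) = 1` with coefficients in `K` (i.e. `w_j` lies in
the free product of the free group `F_n` and `K`) having a solution in `Γ`
also has a solution in `K`. -/
def IsAlgebraicallyClosedIn {Γ : Type*} [Group Γ] (K : Subgroup Γ) : Prop :=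
  ∀ (n m : ℕ) (w : Fin m → Monoid.Coprod (FreeGroup (Fin n)) K),
    (∃ x : Fin n → Γ, ∀ j, Monoid.Coprod.lift (FreeGroup.lift x) K.subtype (w j) = 1) →
    ∃ y : Fin n → Γ, (∀ i, y i ∈ K) ∧
      ∀ j, Monoid.Coprod.lift (FreeGroup.lift y) K.subtype (w j) = 1

section Aux

set_option linter.unusedSectionVars false

variable {ι : Type*} {G : ι → Type*} [∀ i, Group (G i)]

open List

theorem List.chain'_append {α : Type*} {R : α → α → Prop} {l₁ l₂ : List α} :
    List.Chain' R (l₁ ++ l₂) ↔ List.Chain' R l₁ ∧ List.Chain' R l₂ ∧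
      ∀ x ∈ l₁.getLast?, ∀ y ∈ l₂.head?, R x y := List.isChain_append
theorem List.chain'_cons' {α : Type*} {R : α → α → Prop} {x : α} {l : List α} :
    List.Chain' R (x :: l) ↔ (∀ y ∈ l.head?, R x y) ∧ List.Chain' R l := List.isChain_cons
theorem List.chain'_nil {α : Type*} {R : α → α → Prop} : List.Chain' R [] := List.isChain_nil
theorem List.chain'_singleton {α : Type*} {R : α → α → Prop} (a : α) : List.Chain' R [a] :=
  List.isChain_singleton a

def Red (L : List (Σ i, G i)) : Prop :=
  L.Chain' (fun s t => s.1 ≠ t.1) ∧ ∀ s ∈ L, s.2 ≠ 1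

def ofSyl (s : Σ i, G i) : CoprodI G := CoprodI.of s.2
def elem (L : List (Σ i, G i)) : CoprodI G := (L.map ofSyl).prod
def invSyl (s : Σ i, G i) : Σ i, G i := ⟨s.1, s.2⁻¹⟩
def invRev (L : List (Σ i, G i)) : List (Σ i, G i) := (L.map invSyl).reverse
@[simp] lemma elem_nil : elem ([] : List (Σ i, G i)) = 1 := rfl
@[simp] lemma elem_cons (s : Σ i, G i) (L : List (Σ i, G i)) :
    elem (s :: L) = ofSyl s * elem L := by simp [elem]
@[simp] lemma elem_append (L₁ L₂ : List (Σ i, G i)) :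
    elem (L₁ ++ L₂) = elem L₁ * elem L₂ := by simp [elem]
@[simp] lemma elem_singleton (s : Σ i, G i) : elem [s] = ofSyl s := by simp [elem]
@[simp] lemma ofSyl_invSyl (s : Σ i, G i) : ofSyl (invSyl s) = (ofSyl s)⁻¹ := by
  exact MonoidHom.map_inv CoprodI.of s.2
@[simp] lemma invSyl_invSyl (s : Σ i, G i) : invSyl (invSyl s) = s := by cases s; simp only [invSyl]; congr 1; exact inv_inv _
@[simp] lemma invRev_nil : invRev ([] : List (Σ i, G i)) = [] := rfl
@[simp] lemma invRev_length (L : List (Σ i, G i)) : (invRev L).length = L.length := by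
  simp [invRev]
@[simp] lemma elem_invRev (L : List (Σ i, G i)) : elem (invRev L) = (elem L)⁻¹ := by
  induction L with
  | nil => simp
  | cons s L ih =>
      have : invRev (s :: L) = invRev L ++ [invSyl s] := by simp [invRev]
      rw [this]; simp [ih]
lemma invRev_getElem (L : List (Σ i, G i)) (v : ℕ) (hv : v < L.length) :
    (invRev L)[v]'(by simpa) = invSyl (L[L.length - 1 - v]'(by omega)) := by
  simp only [invRev]
  rw [List.getElem_reverse, List.getElem_map]
  congr 2
  simp

lemma gidx {α : Type*} (L : List α) {i j : ℕ} (h : i = j) (hj : j < L.length) :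
    L[i]'(h ▸ hj) = L[j]'hj := by subst h; rfl



set_option maxHeartbeats 1600000 in
lemma deep_cancel_sq (a : CoprodI G) (LB X AM W₁ : List (Σ i, G i))
    (b d₁ m nc₂ : ℕ) (hb0 : 0 < b) (hbLB : LB.length = b)
    (hbN : ((X.length : ℕ) : ZMod b) = 0)
    (hX : ∀ (j : ℕ) (hj : j < X.length), X[j] = LB[j % b]'(by rw [hbLB]; exact Nat.mod_lt _ hb0))
    (hAM : AM.length = m) (hW₁ : W₁ = AM ++ X.drop d₁)
    (hd₁N : d₁ ≤ X.length) (hmb : m + b ≤ nc₂) (hnc₂N : nc₂ ≤ X.length)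
    (hncW : nc₂ ≤ m + (X.length - d₁))
    (helemW₁ : elem W₁ = a * elem X)
    (hcancel : W₁.take nc₂ = invRev (X.drop (X.length - nc₂))) :
    a * a = 1 := by
  haveI : NeZero b := ⟨by omega⟩
  have hW₁len : W₁.length = m + (X.length - d₁) := by
    rw [hW₁]; simp [hAM]
  -- letters
  set letter : ZMod b → (Σ i, G i) := fun z => LB[z.val]'(by rw [hbLB]; exact z.val_lt)
    with hletter
  have hXz : ∀ (j : ℕ) (hj : j < X.length), X[j] = letter ((j : ℕ) : ZMod b) := by
    intro j hj
    rw [hX j hj, hletter]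
    exact (gidx LB (by rw [ZMod.val_natCast]) _).symm
  -- relation letters
  have hrelz : ∀ (v : ℕ), v < nc₂ - m →
      letter ((d₁ + v : ℕ) : ZMod b)
        = invSyl (letter ((X.length - (1 + m + v) : ℕ) : ZMod b)) := by
    intro v hv
    have hu : m + v < nc₂ := by omega
    have hd₁v : d₁ + v < X.length := by omega
    have hlen1 : m + v < (W₁.take nc₂).length := by
      simp [hW₁len]; omega
    have e1 : (W₁.take nc₂)[m + v]'hlen1
        = (invRev (X.drop (X.length - nc₂)))[m + v]'(hcancel ▸ hlen1) :=
      List.getElem_of_eq hcancel hlen1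
    have e2 : (W₁.take nc₂)[m + v]'hlen1 = X[d₁ + v]'hd₁v := by
      rw [List.getElem_take]
      rw [List.getElem_of_eq hW₁ (by rw [hW₁len]; omega)]
      rw [List.getElem_append_right (by omega)]
      rw [List.getElem_drop]
      exact gidx X (by omega) hd₁v
    have hlen2 : m + v < (X.drop (X.length - nc₂)).length := by simp; omega
    have e3 : (invRev (X.drop (X.length - nc₂)))[m + v]'(by simpa using hlen2)
        = invSyl ((X.drop (X.length - nc₂))[(X.drop (X.length - nc₂)).length - 1 - (m + v)]'(by
            omega)) :=
      invRev_getElem _ _ hlen2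
    have e4 : (X.drop (X.length - nc₂))[(X.drop (X.length - nc₂)).length - 1 - (m + v)]'(by
          omega)
        = X[X.length - (1 + m + v)]'(by omega) := by
      rw [List.getElem_drop]
      refine gidx X ?_ (by omega)
      simp
      omega
    rw [← hXz _ hd₁v, ← hXz _ (by omega : X.length - (1 + m + v) < X.length)]
    rw [← e2, e1, e3, e4]
  -- master relation
  have hM : ∀ z : ZMod b, letter ((d₁ : ZMod b) + z)
      = invSyl (letter (-(1 + (m : ZMod b) + z))) := by
    intro z
    have hv : z.val < nc₂ - m := by
      have := z.val_lt
      omega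
    have h1 := hrelz z.val hv
    have hcast1 : ((d₁ + z.val : ℕ) : ZMod b) = (d₁ : ZMod b) + z := by
      push_cast
      rw [ZMod.natCast_val, ZMod.cast_id]
    have hcast2 : ((X.length - (1 + m + z.val) : ℕ) : ZMod b)
        = -(1 + (m : ZMod b) + z) := by
      rw [Nat.cast_sub (by omega), hbN]
      push_cast
      rw [ZMod.natCast_val, ZMod.cast_id]
      ring
    rw [hcast1, hcast2] at h1
    exact h1
  -- prefix products
  set q : ℕ → CoprodI G := fun j => elem (X.take j) with hqdef
  have hqsucc : ∀ (j : ℕ) (hj : j < X.length), q (j + 1) = q j * ofSyl (X[j]'hj) := by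
    intro j hj
    have h1 : X.take (j+1) = X.take j ++ [X[j]'hj] := by
      rw [← List.take_concat_get hj, List.concat_eq_append]
    show elem (X.take (j+1)) = elem (X.take j) * ofSyl (X[j]'hj)
    rw [h1, elem_append, elem_singleton]
  have hqdrop : ∀ j, q j * elem (X.drop j) = elem X := by
    intro j
    calc q j * elem (X.drop j) = elem (X.take j ++ X.drop j) := (elem_append _ _).symm
    _ = elem X := by rw [List.take_append_drop]
  -- pairwise cancellation of group elements
  have hpair : ∀ (u : ℕ) (hu : u < nc₂ - m),
      ofSyl (X[d₁ + u]'(by omega)) = (ofSyl (X[X.length - (1 + m + u)]'(by omega)))⁻¹ := by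
    intro u hu
    have h1 := hM (u : ZMod b)
    have hcast1 : ((d₁ + u : ℕ) : ZMod b) = (d₁ : ZMod b) + u := by push_cast; ring
    have hcast2 : ((X.length - (1 + m + u) : ℕ) : ZMod b) = -(1 + (m : ZMod b) + u) := by
      rw [Nat.cast_sub (by omega), hbN]
      push_cast
      ring
    rw [hXz (d₁ + u) (by omega), hXz (X.length - (1 + m + u)) (by omega), hcast1, hcast2, h1]
    simp
  -- h-constancy
  have hconst : ∀ (u : ℕ), u ≤ nc₂ - m →
      q (X.length - m - u) * (q (d₁ + u))⁻¹ = q (X.length - m) * (q d₁)⁻¹ := by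
    intro u
    induction u with
    | zero => intro _; simp
    | succ u ih =>
      intro hu
      have hu' : u < nc₂ - m := by omega
      have hPlt : X.length - (1 + m + u) < X.length := by omega
      have e1 : q (X.length - m - u)
          = q (X.length - m - (u+1)) * ofSyl (X[X.length - (1 + m + u)]'hPlt) := by
        have h3 := hqsucc (X.length - (1 + m + u)) hPlt
        calc q (X.length - m - u) = q (X.length - (1 + m + u) + 1) := by
              exact congrArg q (by omega)
        _ = q (X.length - (1 + m + u)) * ofSyl (X[X.length - (1 + m + u)]'hPlt) := h3
        _ = q (X.length - m - (u+1)) * ofSyl (X[X.length - (1 + m + u)]'hPlt) := by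
              have := congrArg q (show X.length - (1 + m + u) = X.length - m - (u+1) by omega)
              rw [this]
      have e1' : q (X.length - m - (u+1))
          = q (X.length - m - u) * (ofSyl (X[X.length - (1 + m + u)]'hPlt))⁻¹ := by
        rw [e1]; group
      have e2 : q (d₁ + (u+1))
          = q (d₁ + u) * (ofSyl (X[X.length - (1 + m + u)]'hPlt))⁻¹ := by
        have h4 := hqsucc (d₁ + u) (by omega)
        rw [show d₁ + u + 1 = d₁ + (u+1) by omega] at h4
        rw [h4, hpair u hu']
      have ihu := ih (by omega)
      rw [e1', e2, ← ihu]
      group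
  -- element identities
  have hqAM : elem AM = a * q d₁ := by
    have h1 : elem AM * elem (X.drop d₁) = a * elem X := by
      rw [← elem_append, ← hW₁, helemW₁]
    have h2 : elem (X.drop d₁) = (q d₁)⁻¹ * elem X := by
      rw [← hqdrop d₁]; group
    rw [h2] at h1
    have h3 : elem AM * (q d₁)⁻¹ * elem X = a * elem X := by
      rw [← h1]; group
    have h4 := mul_right_cancel h3
    rw [← h4]; group
  have htake : W₁.take nc₂ = AM ++ (X.drop d₁).take (nc₂ - m) := by
    conv_lhs => rw [hW₁, show nc₂ = AM.length + (nc₂ - m) by rw [hAM]; omega]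
    simp [List.take_append]
  have hseg : elem ((X.drop d₁).take (nc₂ - m)) = (q d₁)⁻¹ * q (d₁ + (nc₂ - m)) := by
    have h5 : X.take (d₁ + (nc₂ - m)) = X.take d₁ ++ (X.drop d₁).take (nc₂ - m) :=
      List.take_add
    have h6 : q (d₁ + (nc₂ - m)) = q d₁ * elem ((X.drop d₁).take (nc₂ - m)) := by
      calc q (d₁ + (nc₂ - m)) = elem (X.take (d₁ + (nc₂ - m))) := rfl
      _ = elem (X.take d₁ ++ (X.drop d₁).take (nc₂ - m)) := by rw [h5]
      _ = q d₁ * elem ((X.drop d₁).take (nc₂ - m)) := by rw [elem_append]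
    rw [h6]; group
  have hidL : elem (W₁.take nc₂) = a * q (d₁ + (nc₂ - m)) := by
    rw [htake, elem_append, hqAM, hseg]
    group
  have hidR : elem (invRev (X.drop (X.length - nc₂))) = (elem X)⁻¹ * q (X.length - nc₂) := by
    rw [elem_invRev]
    have h7 : elem (X.drop (X.length - nc₂)) = (q (X.length - nc₂))⁻¹ * elem X := by
      rw [← hqdrop (X.length - nc₂)]; group
    rw [h7]; group
  have hida : a = (elem X)⁻¹ * q (X.length - m) * (q d₁)⁻¹ := by
    have h6 : a * q (d₁ + (nc₂ - m)) = (elem X)⁻¹ * q (X.length - nc₂) := by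
      rw [← hidL, hcancel, hidR]
    rw [show X.length - nc₂ = X.length - m - (nc₂ - m) by omega] at h6
    have h9 : q (X.length - m - (nc₂ - m))
        = q (X.length - m) * (q d₁)⁻¹ * q (d₁ + (nc₂ - m)) := by
      rw [← hconst (nc₂ - m) le_rfl]; group
    rw [h9] at h6
    have h10 : a * q (d₁ + (nc₂ - m))
        = (elem X)⁻¹ * q (X.length - m) * (q d₁)⁻¹ * q (d₁ + (nc₂ - m)) := by
      rw [h6]; group
    exact mul_right_cancel h10
  -- the anti-palindrome
  have hZlen : (X.drop (X.length - m) ++ X.take d₁).length = m + d₁ := by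
    simp
    omega
  have hZl : ∀ (v : ℕ) (hv : v < m + d₁),
      (X.drop (X.length - m) ++ X.take d₁)[v]'(hZlen ▸ hv)
        = letter (((v : ℕ) : ZMod b) - (m : ZMod b)) := by
    intro v hv
    by_cases hvm : v < m
    · have h11 : (X.drop (X.length - m) ++ X.take d₁)[v]'(hZlen ▸ hv)
          = X[(X.length - m) + v]'(by omega) := by
        rw [List.getElem_append_left (by simp; omega)]
        rw [List.getElem_drop]
      rw [h11, hXz _ (by omega)]
      congr 1
      rw [Nat.cast_add, Nat.cast_sub (by omega), hbN]
      ring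
    · have h12 : (X.drop (X.length - m) ++ X.take d₁)[v]'(hZlen ▸ hv)
          = X[v - m]'(by omega) := by
        rw [List.getElem_append_right (by simp; omega)]
        rw [List.getElem_take]
        refine gidx X ?_ (by omega)
        simp
        omega
      rw [h12, hXz _ (by omega)]
      congr 1
      rw [Nat.cast_sub (by omega)]
  have hZpal : invRev (X.drop (X.length - m) ++ X.take d₁)
      = X.drop (X.length - m) ++ X.take d₁ := by
    apply List.ext_getElem (by simp)
    intro v h1 h2
    have hv : v < m + d₁ := by rw [← hZlen]; exact h2
    rw [invRev_getElem _ v h2]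
    have hv2 : (X.drop (X.length - m) ++ X.take d₁).length - 1 - v < m + d₁ := by omega
    rw [hZl v hv]
    rw [hZl ((X.drop (X.length - m) ++ X.take d₁).length - 1 - v) hv2]
    have hz := hM (((v : ℕ) : ZMod b) - m - d₁)
    have harg1 : (d₁ : ZMod b) + (((v : ℕ) : ZMod b) - m - d₁)
        = ((v : ℕ) : ZMod b) - m := by ring
    have harg2 : -(1 + (m : ZMod b) + (((v : ℕ) : ZMod b) - m - d₁))
        = (d₁ : ZMod b) - 1 - v := by ring
    rw [harg1, harg2] at hz
    have harg3 : ((((X.drop (X.length - m) ++ X.take d₁).length - 1 - v : ℕ)) : ZMod b)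
        - (m : ZMod b) = (d₁ : ZMod b) - 1 - v := by
      rw [hZlen]
      rw [show m + d₁ - 1 - v = (m + d₁) - (1 + v) by omega]
      rw [Nat.cast_sub (by omega)]
      push_cast
      ring
    rw [harg3, ← hz]
  have hZsq : elem (X.drop (X.length - m) ++ X.take d₁)
      * elem (X.drop (X.length - m) ++ X.take d₁) = 1 := by
    have h10 : (elem (X.drop (X.length - m) ++ X.take d₁))⁻¹
        = elem (X.drop (X.length - m) ++ X.take d₁) := by rw [← elem_invRev, hZpal]
    calc elem (X.drop (X.length - m) ++ X.take d₁)
          * elem (X.drop (X.length - m) ++ X.take d₁)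
        = elem (X.drop (X.length - m) ++ X.take d₁)
          * (elem (X.drop (X.length - m) ++ X.take d₁))⁻¹ := by rw [h10]
    _ = 1 := by group
  have helemZ : elem (X.drop (X.length - m) ++ X.take d₁)
      = (q (X.length - m))⁻¹ * elem X * q d₁ := by
    rw [elem_append]
    have h13 : elem (X.drop (X.length - m)) = (q (X.length - m))⁻¹ * elem X := by
      rw [← hqdrop (X.length - m)]; group
    rw [h13]
  -- finish
  have hfin : a⁻¹ = q d₁ * elem (X.drop (X.length - m) ++ X.take d₁) * (q d₁)⁻¹ := by
    rw [helemZ, hida]; group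
  have hsq : a⁻¹ * a⁻¹ = 1 := by
    rw [hfin]
    have h14 : q d₁ * elem (X.drop (X.length - m) ++ X.take d₁) * (q d₁)⁻¹
        * (q d₁ * elem (X.drop (X.length - m) ++ X.take d₁) * (q d₁)⁻¹)
        = q d₁ * (elem (X.drop (X.length - m) ++ X.take d₁)
          * elem (X.drop (X.length - m) ++ X.take d₁)) * (q d₁)⁻¹ := by group
    rw [h14, hZsq]
    group
  rw [← mul_inv_rev] at hsq
  have h15 := congrArg Inv.inv hsq
  simpa using h15


lemma red_redList (w : CoprodI G) : Red (redList w) := by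
  letI := Classical.decEq ι
  letI : ∀ i, DecidableEq (G i) := fun _ => Classical.decEq _
  exact ⟨(CoprodI.Word.equiv w).chain_ne, (CoprodI.Word.equiv w).ne_one⟩
lemma elem_redList (w : CoprodI G) : elem (redList w) = w := by
  letI := Classical.decEq ι
  letI : ∀ i, DecidableEq (G i) := fun _ => Classical.decEq _
  exact (CoprodI.Word.equiv (M := G)).symm_apply_apply w
lemma redList_elem (L : List (Σ i, G i)) (hL : Red L) : redList (elem L) = L := by
  letI := Classical.decEq ι
  letI : ∀ i, DecidableEq (G i) := fun _ => Classical.decEq _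
  have : elem L = CoprodI.Word.equiv.symm ⟨L, hL.2, hL.1⟩ := rfl
  rw [redList, this, Equiv.apply_symm_apply]

lemma len_elem (L : List (Σ i, G i)) (hL : Red L) : len (elem L) = L.length := by
  rw [len, redList_elem L hL]
@[simp] lemma redList_one : redList (1 : CoprodI G) = [] := redList_elem [] ⟨List.chain'_nil, by simp⟩
lemma elem_ne_one (L : List (Σ i, G i)) (hL : Red L) (h : L ≠ []) : elem L ≠ 1 := by
  intro he
  have := redList_elem L hL
  rw [he, redList_one] at this
  exact h this.symm

lemma red_middle {i : ι} {x y' : G i} {Lmid : List (Σ i, G i)}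
    (hred : Red ((⟨i, x⟩ : Σ i, G i) :: (Lmid ++ [⟨i, y'⟩]))) : Red Lmid := by
  obtain ⟨hc, hn⟩ := hred
  have hc' := hc.tail
  exact ⟨(List.chain'_append.mp hc').1, fun s hs => hn s (by simp [hs])⟩

lemma conj_peel {i : ι} (x y' : G i) (Lmid : List (Σ i, G i))
    (hred : Red ((⟨i, x⟩ : Σ i, G i) :: (Lmid ++ [⟨i, y'⟩]))) :
    ∃ L' : List (Σ i, G i), Red L' ∧ L'.length ≤ Lmid.length + 1 ∧
      elem L' = (CoprodI.of x)⁻¹ * elem ((⟨i, x⟩ : Σ i, G i) :: (Lmid ++ [⟨i, y'⟩])) *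
        CoprodI.of x := by
  have hmid : Red Lmid := red_middle hred
  have hcomp : (CoprodI.of x)⁻¹ * elem ((⟨i, x⟩ : Σ i, G i) :: (Lmid ++ [⟨i, y'⟩])) *
      CoprodI.of x = elem Lmid * CoprodI.of (y' * x) := by
    have h1 : elem ((⟨i, x⟩ : Σ i, G i) :: (Lmid ++ [⟨i, y'⟩]))
        = CoprodI.of x * (elem Lmid * CoprodI.of y') := by
      simp [ofSyl, mul_assoc]
    rw [h1, MonoidHom.map_mul]
    group
  by_cases h : y' * x = 1
  · refine ⟨Lmid, hmid, by omega, ?_⟩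
    rw [hcomp, h, MonoidHom.map_one, mul_one]
  · refine ⟨Lmid ++ [⟨i, y' * x⟩], ?_, by simp, ?_⟩
    · constructor
      · rw [List.chain'_append]
        refine ⟨hmid.1, List.chain'_singleton _, ?_⟩
        intro s hs t ht
        simp at ht
        subst ht
        have hc' := hred.1.tail
        have := (List.chain'_append.mp hc').2.2 s hs ⟨i, y'⟩ (by simp)
        simpa using this
      · intro s hs
        simp at hs
        rcases hs with hs | hs
        · exact hmid.2 s hs
        · subst hs; simpa using h
    · rw [hcomp]; simp [ofSyl]

lemma conj_letter_of_sq [Nonempty ι] :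
    ∀ (n : ℕ) (a : CoprodI G), len a ≤ n → a * a = 1 →
    ∃ (i : ι) (g : CoprodI G) (x : G i), a = g⁻¹ * CoprodI.of x * g := by
  intro n
  induction n with
  | zero =>
    intro a hlen _
    have : redList a = [] := List.eq_nil_of_length_eq_zero (Nat.le_zero.mp hlen)
    have ha : a = 1 := by rw [← elem_redList a, this, elem_nil]
    exact ⟨Classical.arbitrary ι, 1, 1, by simp [ha]⟩
  | succ n ih =>
    intro a hlen hsq
    have hared : Red (redList a) := red_redList a
    have haL : a = elem (redList a) := (elem_redList a).symm
    rcases hL : redList a with _ | ⟨s, L''⟩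
    · exact ⟨Classical.arbitrary ι, 1, 1, by rw [haL, hL]; simp⟩
    rcases L''.eq_nil_or_concat' with rfl | ⟨Lmid, t, rfl⟩
    · exact ⟨s.1, 1, s.2, by rw [haL, hL]; simp [ofSyl]⟩
    obtain ⟨i, x⟩ := s
    obtain ⟨j, y'⟩ := t
    rw [hL] at hared haL
    by_cases hst : i = j
    · subst hst
      obtain ⟨L', hL'red, hL'len, hL'elem⟩ := conj_peel x y' Lmid hared
      rw [← haL] at hL'elem
      have hlen' : len (elem L') ≤ n := by
        rw [len_elem L' hL'red]
        have : len a = Lmid.length + 2 := by rw [len, hL]; simp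
        omega
      have hsq' : elem L' * elem L' = 1 := by
        have hgr : (CoprodI.of x)⁻¹ * a * CoprodI.of x * ((CoprodI.of x)⁻¹ * a * CoprodI.of x)
            = (CoprodI.of x)⁻¹ * (a * a) * CoprodI.of x := by group
        rw [hL'elem, hgr, hsq]
        group
      obtain ⟨i₀, g, z, hgz⟩ := ih (elem L') hlen' hsq'
      refine ⟨i₀, g * (CoprodI.of x)⁻¹, z, ?_⟩
      have : a = CoprodI.of x * elem L' * (CoprodI.of x)⁻¹ := by
        rw [hL'elem]; group
      rw [this, hgz]
      group
    · -- cyclically reduced: a² ≠ 1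
      exfalso
      have hredLL : Red ((⟨i,x⟩ :: (Lmid ++ [⟨j,y'⟩])) ++ (⟨i,x⟩ :: (Lmid ++ [⟨j,y'⟩]))) := by
        constructor
        · rw [List.chain'_append]
          refine ⟨hared.1, hared.1, ?_⟩
          intro s hs t ht
          have : ((⟨i,x⟩ : Σ i, G i) :: (Lmid ++ [⟨j,y'⟩])).getLast? = some ⟨j, y'⟩ := by
            rw [show (⟨i,x⟩ : Σ i, G i) :: (Lmid ++ [⟨j,y'⟩]) = (⟨i,x⟩ :: Lmid) ++ [⟨j,y'⟩] by simp,
              List.getLast?_concat]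
          rw [this] at hs
          simp at hs ht
          subst hs; subst ht
          simpa using fun h => hst h.symm
        · intro s hs
          have hmem : ∀ u ∈ (⟨i,x⟩ : Σ i, G i) :: (Lmid ++ [⟨j,y'⟩]), u.2 ≠ 1 := hared.2
          rw [List.mem_append] at hs
          rcases hs with hs | hs <;> exact hmem s hs
      have : a * a = elem ((⟨i,x⟩ :: (Lmid ++ [⟨j,y'⟩])) ++ (⟨i,x⟩ :: (Lmid ++ [⟨j,y'⟩]))) := by
        rw [elem_append, ← haL]
      rw [hsq] at this
      exact elem_ne_one _ hredLL (by simp) this.symm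

lemma head_last_ne {B : CoprodI G} (hcyc : len B = cyclicLength B) (h2 : 2 ≤ len B) :
    ∀ s t : Σ i, G i, (redList B).head? = some s → (redList B).getLast? = some t →
      s.1 ≠ t.1 := by
  intro s t hs ht hst
  have hred : Red (redList B) := red_redList B
  have hBL : B = elem (redList B) := (elem_redList B).symm
  rcases hL : redList B with _ | ⟨s', L''⟩
  · rw [hL] at hs; simp at hs
  rcases L''.eq_nil_or_concat' with rfl | ⟨Lmid, t', rfl⟩
  · rw [len, hL] at h2; simp at h2
  rw [hL] at hs ht hred hBL
  have hs' : s = s' := by simpa using hs.symm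
  have ht' : t = t' := by
    rw [show (s' :: (Lmid ++ [t'])) = (s' :: Lmid) ++ [t'] by simp, List.getLast?_concat] at ht
    simpa using ht.symm
  subst hs'; subst ht'
  obtain ⟨i, x⟩ := s
  obtain ⟨j, y'⟩ := t
  have hij : i = j := hst
  subst hij
  obtain ⟨L', hL'red, hL'len, hL'elem⟩ := conj_peel x y' Lmid hred
  rw [← hBL] at hL'elem
  have hle : cyclicLength B ≤ L'.length := by
    have : len ((CoprodI.of x)⁻¹ * B * CoprodI.of x) = L'.length := by
      rw [← hL'elem, len_elem L' hL'red]
    rw [← this]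
    exact Nat.sInf_le ⟨CoprodI.of x, rfl⟩
  have : len B = Lmid.length + 2 := by rw [len, hL]; simp
  omega



lemma invRev_concat (L : List (Σ i, G i)) (s : Σ i, G i) :
    invRev (L ++ [s]) = invSyl s :: invRev L := by simp [invRev]

def RAOut (U V U₁ T T' V₂ M : List (Σ i, G i)) (nc : ℕ) : Prop :=
  U = U₁ ++ T ∧ V = T' ++ V₂ ∧
  T.length = nc + M.length ∧ T'.length = nc + M.length ∧ M.length ≤ 1 ∧
  T'.take nc = invRev (T.drop M.length) ∧
  Red (U₁ ++ M ++ V₂) ∧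
  elem (U₁ ++ M ++ V₂) = elem U * elem V ∧
  ∀ c d : List (Σ i, G i), c ++ U₁ ≠ [] → V₂ ++ d ≠ [] →
    Relation.ReflTransGen InnerStep (c ++ U ++ V ++ d) (c ++ (U₁ ++ M ++ V₂) ++ d)

lemma reduce_append_triv (U V : List (Σ i, G i)) (h : Red (U ++ V)) :
    ∃ U₁ T T' V₂ M nc, RAOut U V U₁ T T' V₂ M nc := by
  refine ⟨U, [], [], V, [], 0, by simp, by simp, by simp, by simp, by simp, by simp,
    by simpa, by simp, ?_⟩
  intro c d _ _
  have : c ++ (U ++ [] ++ V) ++ d = c ++ U ++ V ++ d := by simp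
  rw [this]

theorem reduce_append_aux : ∀ (n : ℕ) (U V : List (Σ i, G i)), U.length ≤ n → Red U → Red V →
    ∃ U₁ T T' V₂ M nc, RAOut U V U₁ T T' V₂ M nc := by
  intro n
  induction n with
  | zero =>
    intro U V hU hrU hrV
    have hU0 : U = [] := List.eq_nil_of_length_eq_zero (Nat.le_zero.mp hU)
    subst hU0
    exact reduce_append_triv [] V (by simpa)
  | succ n ih =>
    intro U V hlen hrU hrV
    rcases U.eq_nil_or_concat' with rfl | ⟨U', sx, rfl⟩
    · exact reduce_append_triv [] V (by simpa)
    cases V with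
    | nil =>
      exact reduce_append_triv (U' ++ [sx]) [] (by simpa)
    | cons sy V' =>
      obtain ⟨i, x⟩ := sx
      obtain ⟨j, y⟩ := sy
      have hrU' : Red U' := by
        obtain ⟨hc, hn⟩ := hrU
        exact ⟨(List.chain'_append.mp hc).1, fun s hs => hn s (by simp [hs])⟩
      have hrV' : Red V' := by
        obtain ⟨hc, hn⟩ := hrV
        exact ⟨hc.tail, fun s hs => hn s (by simp [hs])⟩
      have hx1 : x ≠ 1 := hrU.2 ⟨i, x⟩ (by simp)
      have hy1 : y ≠ 1 := hrV.2 ⟨j, y⟩ (by simp)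
      have hlastU' : ∀ s : (Σ i, G i), U'.getLast? = some s → s.1 ≠ i := by
        intro s hs
        have := (List.chain'_append.mp hrU.1).2.2 s hs ⟨i, x⟩ (by simp)
        simpa using this
      have hheadV' : ∀ s : (Σ i, G i), V'.head? = some s → j ≠ s.1 := by
        intro s hs
        have hc := hrV.1
        rw [List.chain'_cons'] at hc
        exact hc.1 s hs
      by_cases hij : i = j
      · subst hij
        by_cases hxy : x * y = 1
        · -- cancellation
          obtain ⟨U₁, T, T', V₂, M, nc, hUeq, hVeq, hTl, hT'l, hMl, hTT', hred, helem, hsteps⟩ :=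
            ih U' V' (by simp at hlen ⊢; omega) hrU' hrV'
          have hMT : M.length ≤ T.length := by omega
          refine ⟨U₁, T ++ [⟨i, x⟩], ⟨i, y⟩ :: T', V₂, M, nc + 1,
            by rw [hUeq, List.append_assoc], by rw [hVeq]; rfl,
            by simp [hTl]; omega, by simp [hT'l]; omega, hMl, ?_, hred, ?_, ?_⟩
          · rw [List.drop_append_of_le_length hMT, invRev_concat]
            have hy : y = x⁻¹ := by
              rw [← one_mul y, ← inv_mul_cancel x, mul_assoc, hxy, mul_one]
            rw [List.take_succ_cons, hTT']
            congr 1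
            simp [invSyl, hy]
          · have hof : ofSyl (⟨i, x⟩ : Σ i, G i) * ofSyl (⟨i, y⟩ : Σ i, G i) = 1 := by
              simp only [ofSyl, ← MonoidHom.map_mul, hxy]
              exact CoprodI.of.map_one
            have h2 : elem (U' ++ [⟨i, x⟩]) * elem (⟨i, y⟩ :: V')
                = elem U' * ((ofSyl ⟨i, x⟩ * ofSyl ⟨i, y⟩) * elem V') := by
              simp [mul_assoc]
            rw [h2, hof, one_mul, helem]
          · intro c d hc hd
            have hcU' : c ++ U' ≠ [] := by
              simp only [ne_eq, List.append_eq_nil_iff] at hc ⊢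
              rw [hUeq]; simp; tauto
            have hV'd : V' ++ d ≠ [] := by
              simp only [ne_eq, List.append_eq_nil_iff] at hd ⊢
              rw [hVeq]; simp; tauto
            have step1 : InnerStep (c ++ (U' ++ [⟨i, x⟩]) ++ (⟨i, y⟩ :: V') ++ d)
                ((c ++ U') ++ (V' ++ d)) := by
              refine ⟨c ++ U', V' ++ d, i, x, y, hcU', hV'd, by simp, Or.inl ⟨hxy, rfl⟩⟩
            have step2 := hsteps c d hc hd
            have : (c ++ U') ++ (V' ++ d) = c ++ U' ++ V' ++ d := by simp
            rw [this] at step1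
            exact Relation.ReflTransGen.head step1 step2
        · -- merge
          refine ⟨U', [⟨i, x⟩], [⟨i, y⟩], V', [⟨i, x * y⟩], 0,
            rfl, rfl, rfl, rfl, by simp, by simp, ?_, ?_, ?_⟩
          · constructor
            · rw [List.chain'_append]
              refine ⟨?_, hrV'.1, ?_⟩
              · rw [List.chain'_append]
                refine ⟨hrU'.1, List.chain'_singleton _, ?_⟩
                intro s hs t ht
                simp at ht
                subst ht
                exact hlastU' s hs
              · intro s hs t ht
                rw [List.getLast?_concat] at hs
                simp at hs
                subst hs
                exact hheadV' t (by simpa using ht)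
            · intro s hs
              simp at hs
              rcases hs with hs | hs | hs
              · exact hrU'.2 s hs
              · subst hs; simpa using hxy
              · exact hrV'.2 s hs
          · have hof : ofSyl (⟨i, x * y⟩ : Σ i, G i) = ofSyl ⟨i, x⟩ * ofSyl ⟨i, y⟩ :=
              CoprodI.of.map_mul x y
            simp [hof, mul_assoc]
          · intro c d hc hd
            have step1 : InnerStep (c ++ (U' ++ [⟨i, x⟩]) ++ (⟨i, y⟩ :: V') ++ d)
                ((c ++ U') ++ ⟨i, x * y⟩ :: (V' ++ d)) :=
              ⟨c ++ U', V' ++ d, i, x, y, hc, hd, by simp, Or.inr ⟨hxy, rfl⟩⟩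
            have : (c ++ U') ++ ⟨i, x * y⟩ :: (V' ++ d)
                = c ++ (U' ++ [⟨i, x * y⟩] ++ V') ++ d := by simp
            rw [this] at step1
            exact Relation.ReflTransGen.single step1
      · -- distinct indices: no interaction
        apply reduce_append_triv
        constructor
        · rw [List.chain'_append]
          refine ⟨hrU.1, hrV.1, ?_⟩
          intro s hs t ht
          rw [List.getLast?_concat] at hs
          simp at hs ht
          subst hs
          subst ht
          simpa using hij
        · intro s hs
          simp at hs
          rcases hs with hs | hs | hs
          · exact hrU'.2 s hs
          · subst hs; exact hx1
          · exact hrV.2 s (by simp [hs])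



lemma flatten_replicate_succ (LB : List (Σ i, G i)) (k : ℕ) :
    (List.replicate (k+1) LB).flatten = LB ++ (List.replicate k LB).flatten := by
  rw [List.replicate_succ, List.flatten_cons]

lemma length_flatten_replicate (LB : List (Σ i, G i)) (k : ℕ) :
    ((List.replicate k LB).flatten).length = k * LB.length := by
  induction k with
  | zero => simp
  | succ k ih => rw [flatten_replicate_succ]; simp [ih]; ring

lemma elem_flatten_replicate (LB : List (Σ i, G i)) (k : ℕ) :
    elem ((List.replicate k LB).flatten) = (elem LB) ^ k := by
  induction k with
  | zero => simp
  | succ k ih => rw [flatten_replicate_succ, elem_append, ih, pow_succ']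

lemma head?_flatten_replicate (LB : List (Σ i, G i)) (hLB : LB ≠ []) (k : ℕ) (t : Σ i, G i)
    (h : ((List.replicate k LB).flatten).head? = some t) : LB.head? = some t := by
  cases k with
  | zero => simp at h
  | succ k =>
    obtain ⟨u, LB', rfl⟩ := List.exists_cons_of_ne_nil hLB
    rw [flatten_replicate_succ] at h
    simpa using h

lemma red_flatten_replicate (LB : List (Σ i, G i)) (hred : Red LB)
    (hjunc : ∀ s t : Σ i, G i, LB.getLast? = some s → LB.head? = some t → s.1 ≠ t.1) (k : ℕ) :
    Red ((List.replicate k LB).flatten) := by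
  induction k with
  | zero => exact ⟨List.chain'_nil, by simp⟩
  | succ k ih =>
    rw [flatten_replicate_succ]
    constructor
    · rw [List.chain'_append]
      refine ⟨hred.1, ih.1, ?_⟩
      intro s hs t ht
      exact hjunc s t hs (head?_flatten_replicate LB (by rintro rfl; simp at hs) k t ht)
    · intro s hs
      rw [List.mem_append] at hs
      rcases hs with hs | hs
      · exact hred.2 s hs
      · obtain ⟨l, hl, hsl⟩ := List.mem_flatten.mp hs
        rw [List.eq_of_mem_replicate hl] at hsl
        exact hred.2 s hsl

lemma getElem_flatten_replicate (LB : List (Σ i, G i)) (hb : 0 < LB.length) (k : ℕ) :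
    ∀ (j : ℕ) (hj : j < k * LB.length),
      ((List.replicate k LB).flatten)[j]'(by rw [length_flatten_replicate]; omega)
        = LB[j % LB.length]'(Nat.mod_lt _ hb) := by
  induction k with
  | zero => intro j hj; omega
  | succ k ih =>
    intro j hj
    by_cases hjb : j < LB.length
    · have h1 : ((List.replicate (k+1) LB).flatten)[j]'(by rw [length_flatten_replicate]; omega)
          = LB[j]'hjb := by
        simp only [flatten_replicate_succ]
        exact List.getElem_append_left hjb
      rw [h1]
      congr 1
      exact (Nat.mod_eq_of_lt hjb).symm
    · obtain ⟨e, rfl⟩ : ∃ e, j = LB.length + e := ⟨j - LB.length, by omega⟩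
      have he : e < k * LB.length := by
        have := hj; rw [Nat.succ_mul] at this; omega
      have h1 : ((List.replicate (k+1) LB).flatten)[LB.length + e]'(by
            rw [length_flatten_replicate]; omega)
          = ((List.replicate k LB).flatten)[e]'(by rw [length_flatten_replicate]; omega) := by
        simp only [flatten_replicate_succ]
        rw [List.getElem_append_right (by omega)]
        congr 1
        omega
      rw [h1, ih e he]
      congr 1
      exact (Nat.add_mod_left _ _).symm

theorem reduce_append (U V : List (Σ i, G i)) (hU : Red U) (hV : Red V) :
    ∃ U₁ T T' V₂ M nc, RAOut U V U₁ T T' V₂ M nc :=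
  reduce_append_aux U.length U V le_rfl hU hV

end Aux

/-- **Corollary 1, part 1.** Let `a` be a reduced word, `B` a simple word and `k`
a positive integer with `k ≥ |a|/|B| + 2`. If `a` is hyperbolic, then when the
word `B^k a B^k` is brought to reduced form, its first and last syllables are
not affected. -/
theorem ends_unaffected_of_hyperbolic
    {ι : Type*} [Nontrivial ι] {G : ι → Type*} [∀ i, Group (G i)]
    (hG : ∀ i, Nontrivial (G i))
    (a B : Monoid.CoprodI G) (hB : IsSimple B)
    (k : ℕ) (hk : 0 < k)
    (hkq : (len a : ℚ) / (len B : ℚ) + 2 ≤ (k : ℚ))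
    (ha : IsHyperbolic a) :
    EndsUnaffected
      ((List.replicate k (redList B)).flatten ++ redList a ++
        (List.replicate k (redList B)).flatten)
      (B ^ k * a * B ^ k) := by
  classical
  obtain ⟨hBcyc, hB2, -⟩ := hB
  obtain ⟨hB1, hBlen⟩ := hBcyc
  have hb0 : 0 < len B := by omega
  -- numeric bound : len a + 2 * len B ≤ k * len B
  have hbQ : (0 : ℚ) < (len B : ℚ) := by exact_mod_cast hb0
  have hNle : len a + 2 * len B ≤ k * len B := by
    have h1 := mul_le_mul_of_nonneg_right hkq (le_of_lt hbQ)
    rw [add_mul, div_mul_cancel₀ _ (ne_of_gt hbQ)] at h1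
    exact_mod_cast h1
  -- the periodic word X = B^k as a list
  have hjunc : ∀ s t : Σ i, G i, (redList B).getLast? = some s → (redList B).head? = some t →
      s.1 ≠ t.1 := fun s t hs ht h => head_last_ne hBlen hB2 t s ht hs h.symm
  have hredX : Red ((List.replicate k (redList B)).flatten) :=
    red_flatten_replicate _ (red_redList B) hjunc k
  have hXlen : ((List.replicate k (redList B)).flatten).length = k * len B :=
    length_flatten_replicate _ k
  have helemX : elem ((List.replicate k (redList B)).flatten) = B ^ k := by
    rw [elem_flatten_replicate, elem_redList]
  have hXne : (List.replicate k (redList B)).flatten ≠ [] := by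
    apply List.ne_nil_of_length_pos
    rw [hXlen]
    have := Nat.mul_pos hk hb0
    omega
  -- Step A : reduce the junction (redList a) ++ X
  obtain ⟨a₁, T₁, T'₁, V₂, M₁, nc₁, hUeq1, hVeq1, hTl1, hT'l1, hMl1, hTT'1, hred1, helem1,
    hsteps1⟩ := reduce_append (redList a) _ (red_redList a) hredX
  have hV₂ : V₂ = ((List.replicate k (redList B)).flatten).drop (nc₁ + M₁.length) := by
    rw [hVeq1, ← hT'l1, List.drop_left]
  have hlena : a₁.length + (nc₁ + M₁.length) = len a := by
    have h2 := congrArg List.length hUeq1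
    rw [List.length_append, hTl1] at h2
    have : (redList a).length = len a := rfl
    omega
  have hd₁a : nc₁ + M₁.length ≤ len a := by omega
  have helemW₁ : elem (a₁ ++ M₁ ++ V₂) = a * elem ((List.replicate k (redList B)).flatten) := by
    rw [helem1, elem_redList]
  have hW₁len : (a₁ ++ M₁ ++ V₂).length
      = (a₁.length + M₁.length) + (k * len B - (nc₁ + M₁.length)) := by
    rw [List.length_append, List.length_append, hV₂, List.length_drop, hXlen]
  -- Step B : reduce the junction X ++ (a₁ ++ M₁ ++ V₂)
  obtain ⟨U₁, T₂, T'₂, V₂₂, M₂, nc₂, hUeq2, hVeq2, hTl2, hT'l2, hMl2, hTT'2, hred2, helem2,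
    hsteps2⟩ := reduce_append _ (a₁ ++ M₁ ++ V₂) hredX hred1
  have hlenU2 : U₁.length + (nc₂ + M₂.length) = k * len B := by
    have h2 := congrArg List.length hUeq2
    rw [List.length_append, hTl2, hXlen] at h2
    omega
  have hlenV2 : (nc₂ + M₂.length) + V₂₂.length = (a₁ ++ M₁ ++ V₂).length := by
    have h2 := congrArg List.length hVeq2
    simp only [List.length_append] at h2 ⊢
    omega
  -- Key bound: the second cancellation cannot reach one period deep into V₂
  have hkey : nc₂ < (a₁.length + M₁.length) + len B := by
    by_contra hcase
    push_neg at hcase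
    have hXbN : ((((List.replicate k (redList B)).flatten).length : ℕ) : ZMod (len B)) = 0 := by
      rw [hXlen, Nat.cast_mul, ZMod.natCast_self, mul_zero]
    have hXget : ∀ (j : ℕ) (hj : j < ((List.replicate k (redList B)).flatten).length),
        ((List.replicate k (redList B)).flatten)[j]
          = (redList B)[j % len B]'(Nat.mod_lt _ hb0) := by
      intro j hj
      exact getElem_flatten_replicate (redList B) hb0 k j (hXlen ▸ hj)
    have hcancel : (a₁ ++ M₁ ++ V₂).take nc₂
        = invRev (((List.replicate k (redList B)).flatten).drop
            (((List.replicate k (redList B)).flatten).length - nc₂)) := by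
      have h1 : (a₁ ++ M₁ ++ V₂).take nc₂ = T'₂.take nc₂ := by
        rw [hVeq2]
        rw [List.take_append_of_le_length (by rw [hT'l2]; omega)]
      have h2 : T₂ = ((List.replicate k (redList B)).flatten).drop U₁.length := by
        rw [hUeq2, List.drop_left]
      have h3 : T₂.drop M₂.length = ((List.replicate k (redList B)).flatten).drop
          (((List.replicate k (redList B)).flatten).length - nc₂) := by
        rw [h2, List.drop_drop]
        congr 1
        rw [hXlen]
        omega
      rw [h1, hTT'2, h3]
    have hsq : a * a = 1 := by
      refine deep_cancel_sq a (redList B) ((List.replicate k (redList B)).flatten)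
        (a₁ ++ M₁) (a₁ ++ M₁ ++ V₂) (len B) (nc₁ + M₁.length) (a₁.length + M₁.length) nc₂
        hb0 rfl hXbN hXget (by simp) (by rw [hV₂]) (by rw [hXlen]; omega) hcase
        (by rw [hXlen]; omega) ?_ helemW₁ hcancel
      rw [hXlen, hW₁len] at *
      omega
    obtain ⟨i, g, x, hconj⟩ := conj_letter_of_sq (len a) a le_rfl hsq
    exact ha i g x hconj
  -- Good case : ends survive
  have hU₁ne : U₁ ≠ [] := by
    apply List.ne_nil_of_length_pos
    omega
  have hV₂₂ne : V₂₂ ≠ [] := by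
    apply List.ne_nil_of_length_pos
    rw [hW₁len] at hlenV2
    omega
  have hV₂ne : V₂ ++ ([] : List (Σ i, G i)) ≠ [] := by
    rw [List.append_nil]
    apply List.ne_nil_of_length_pos
    rw [hV₂, List.length_drop, hXlen]
    omega
  have hstep1 := hsteps1 ((List.replicate k (redList B)).flatten) []
    (by intro h; rw [List.append_eq_nil_iff] at h; exact hXne h.1) hV₂ne
  have hstep2 := hsteps2 [] [] (by simpa using hU₁ne) (by simpa using hV₂₂ne)
  have hfinal : redList (B ^ k * a * B ^ k) = U₁ ++ M₂ ++ V₂₂ := by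
    have h4 : B ^ k * a * B ^ k = elem (U₁ ++ M₂ ++ V₂₂) := by
      rw [helem2, helemX, helemW₁, helemX]
      group
    rw [h4, redList_elem _ hred2]
  show Relation.ReflTransGen InnerStep _ (redList (B ^ k * a * B ^ k))
  rw [hfinal]
  simp only [List.append_nil, List.nil_append] at hstep1 hstep2
  exact hstep1.trans hstep2

end FreeProdPaper
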